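/- Let μ be a Borel measure on ℝ₊^{n+1} and H : ℝ₊^{n+1} → ℂ a continuous function whose parabolic non-tangential maximal function N(H)(x) = sup{|H(t,y)| : y ∈ B(x,√t)} is in L¹(ℝⁿ). Then ∫_{ℝ₊^{n+1}} |H| dμ ≤ C_n ∫_{ℝⁿ} N(H)(x) · 𝒞(μ)(x) dx, where 𝒞(μ)(x) = sup over open balls B ∋ x of μ(B̂)/|B| and B̂ = {(t,y) : dist(y, Bᶜ) ≥ √t} is the parabolic tent over B. -/

import Mathlib

open MeasureTheory Metric
open scoped ENNReal NNReal

/-- The parabolic tent over an open set `O ⊆ ℝⁿ`: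
`Ô = {(t,y) ∈ ℝ₊^{n+1} : dist(y, Oᶜ) ≥ √t}`. -/
def parabolicTent (n : ℕ) (O : Set (EuclideanSpace ℝ (Fin n))) :
    Set (ℝ × EuclideanSpace ℝ (Fin n)) :=
  {z | 0 < z.1 ∧ Real.sqrt z.1 ≤ infDist z.2 Oᶜ}

/-- The parabolic non-tangential maximal function
`N(H)(x) = sup {|H(t,y)| : 0 < t, y ∈ B(x,√t)}`. -/
noncomputable def ntMax (n : ℕ) (H : ℝ × EuclideanSpace ℝ (Fin n) → ℂ)
    (x : EuclideanSpace ℝ (Fin n)) : ℝ≥0∞ :=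
  ⨆ (t : ℝ) (_ : 0 < t) (y : EuclideanSpace ℝ (Fin n)) (_ : y ∈ ball x (Real.sqrt t)),
    ENNReal.ofReal ‖H (t, y)‖

/-- The Carleson box function `𝒞(μ)(x) = sup_{B ∋ x} μ(B̂)/|B|`. -/
noncomputable def carlesonFn (n : ℕ) (μ : Measure (ℝ × EuclideanSpace ℝ (Fin n)))
    (x : EuclideanSpace ℝ (Fin n)) : ℝ≥0∞ :=
  ⨆ (c : EuclideanSpace ℝ (Fin n)) (r : ℝ) (_ : 0 < r) (_ : x ∈ ball c r),
    μ (parabolicTent n (ball c r)) / volume (ball c r)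

/-! ### Auxiliary lemmas -/

/-- In a nontrivial Euclidean space there are points outside any ball. -/
lemma exists_notMem_ball {n : ℕ} (hn : 1 ≤ n) (c : EuclideanSpace ℝ (Fin n)) (R : ℝ) :
    ∃ w : EuclideanSpace ℝ (Fin n), w ∉ ball c R := by
  refine ⟨c + EuclideanSpace.single ⟨0, hn⟩ (|R| + 1), ?_⟩
  simp only [mem_ball, not_lt, dist_eq_norm, add_sub_cancel_left, EuclideanSpace.norm_single]
  rw [Real.norm_eq_abs]
  have h1 : (0:ℝ) ≤ |R| + 1 := by positivity
  rw [abs_of_nonneg h1]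
  have := le_abs_self R
  linarith

/-- The non-tangential maximal function is lower semicontinuous. -/
lemma ntMax_lsc (n : ℕ) (H : ℝ × EuclideanSpace ℝ (Fin n) → ℂ) :
    LowerSemicontinuous (ntMax n H) := by
  intro x a ha
  simp only [ntMax, lt_iSup_iff] at ha
  obtain ⟨t, ht, y, hy, hlt⟩ := ha
  have hx : x ∈ ball y (Real.sqrt t) := by
    rw [mem_ball, dist_comm]; exact mem_ball.1 hy
  filter_upwards [isOpen_ball.mem_nhds hx] with x' hx'
  refine lt_of_lt_of_le hlt ?_
  rw [ntMax]
  refine le_iSup_of_le t (le_iSup_of_le ht (le_iSup_of_le y (le_iSup_of_le ?_ le_rfl)))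
  rw [mem_ball, dist_comm]; exact mem_ball.1 hx'

/-- The Carleson box function is lower semicontinuous. -/
lemma carlesonFn_lsc (n : ℕ) (μ : Measure (ℝ × EuclideanSpace ℝ (Fin n))) :
    LowerSemicontinuous (carlesonFn n μ) := by
  intro x a ha
  simp only [carlesonFn, lt_iSup_iff] at ha
  obtain ⟨c, r, hr, hx, hlt⟩ := ha
  filter_upwards [isOpen_ball.mem_nhds hx] with x' hx'
  refine lt_of_lt_of_le hlt ?_
  rw [carlesonFn]
  exact le_iSup_of_le c (le_iSup_of_le r (le_iSup_of_le hr (le_iSup_of_le hx' le_rfl)))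

/-- Key covering estimate: the measure of the parabolic tent over a measurable set `O`
is controlled by the integral of the Carleson box function over `O`. -/
lemma tent_measure_le {n : ℕ} (hn : 1 ≤ n) (μ : Measure (ℝ × EuclideanSpace ℝ (Fin n)))
    (O : Set (EuclideanSpace ℝ (Fin n))) (hO : MeasurableSet O) :
    μ (parabolicTent n O) ≤
      ENNReal.ofReal (15 ^ n) * ∫⁻ x in O, carlesonFn n μ x := by
  haveI : Nonempty (Fin n) := ⟨⟨0, hn⟩⟩
  set d : EuclideanSpace ℝ (Fin n) → ℝ := fun y => infDist y Oᶜ with hd_def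
  -- exhaust the tent by the pieces where `d` is bounded
  have hexh : parabolicTent n O = ⋃ m : ℕ, (parabolicTent n O ∩ {z | d z.2 ≤ (m:ℝ)}) := by
    ext z
    simp only [Set.mem_iUnion, Set.mem_inter_iff, Set.mem_setOf_eq]
    constructor
    · intro hz
      obtain ⟨m, hm⟩ := exists_nat_ge (d z.2)
      exact ⟨m, hz, hm⟩
    · rintro ⟨m, hz, -⟩; exact hz
  have hmono : Monotone (fun m : ℕ => parabolicTent n O ∩ {z | d z.2 ≤ (m:ℝ)}) := by
    intro m m' hmm z hz
    have h2 : d z.2 ≤ (m:ℝ) := hz.2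
    exact ⟨hz.1, show d z.2 ≤ (m':ℝ) from h2.trans (Nat.cast_le.2 hmm)⟩
  rw [hexh, hmono.measure_iUnion]
  refine iSup_le fun m => ?_
  -- Vitali covering of the index set
  obtain ⟨u, hut, hdisj, hcov⟩ :=
    Vitali.exists_disjoint_subfamily_covering_enlargement_closedBall
      {y : EuclideanSpace ℝ (Fin n) | 0 < d y ∧ d y ≤ (m:ℝ)} id (fun y => d y / 5) m
      (fun a ha => by
        have h5 : d a / 5 ≤ d a := by
          have := ha.1.le; linarith
        exact h5.trans ha.2) 4 (by norm_num)
  -- the subfamily is countable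
  have hdisj' : u.PairwiseDisjoint fun a => ball a (d a / 5) :=
    fun a ha a' ha' hne => hdisj ha ha' hne |>.mono ball_subset_closedBall ball_subset_closedBall
  have hu_pos : ∀ b ∈ u, 0 < d b := fun b hb => (hut hb).1
  have hu_count : u.Countable := by
    refine hdisj'.countable_of_isOpen (fun b _ => isOpen_ball) fun b hb => ?_
    exact nonempty_ball.2 (by have := hu_pos b hb; positivity)
  -- inclusion of the truncated tent in the union of tents over enlarged balls
  have hincl : parabolicTent n O ∩ {z | d z.2 ≤ (m:ℝ)} ⊆
      ⋃ b ∈ u, parabolicTent n (ball (id b) (3 * d b)) := by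
    rintro ⟨t, y⟩ ⟨⟨ht, hsq⟩, hdm⟩
    have hsq0 : 0 < Real.sqrt t := Real.sqrt_pos.2 ht
    have hd0 : 0 < d y := lt_of_lt_of_le hsq0 hsq
    obtain ⟨b, hbu, hsub⟩ := hcov y ⟨hd0, hdm⟩
    have hdb : 0 < d b := hu_pos b hbu
    have hab : dist y b ≤ 4 * (d b / 5) := by
      have hmem : (y : EuclideanSpace ℝ (Fin n)) ∈ closedBall (id y) (d y / 5) :=
        mem_closedBall_self (by positivity)
      exact mem_closedBall.1 (hsub hmem)
    have hda : d y ≤ d b + dist y b := infDist_le_infDist_add_dist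
    refine Set.mem_biUnion hbu ?_
    refine ⟨ht, ?_⟩
    have hne : ((ball (id b) (3 * d b))ᶜ : Set (EuclideanSpace ℝ (Fin n))).Nonempty := by
      obtain ⟨w, hw⟩ := exists_notMem_ball hn (id b) (3 * d b)
      exact ⟨w, hw⟩
    by_contra hlt
    push_neg at hlt
    obtain ⟨w, hw, hwd⟩ := (infDist_lt_iff hne).1 hlt
    have h3 : 3 * d b ≤ dist w b := by
      simpa [mem_ball, not_lt] using hw
    have htri : dist w b ≤ dist w y + dist y b := dist_triangle w y b
    have h1 : dist y w < Real.sqrt t := hwd.trans_le ?_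
    · rw [dist_comm] at h1
      nlinarith [hsq]
    · exact le_refl _ |>.trans (le_refl _)
  refine (measure_mono hincl).trans ?_
  refine (measure_biUnion_le μ hu_count _).trans ?_
  -- pointwise estimate on each tent via the Carleson function
  set ν : Measure (EuclideanSpace ℝ (Fin n)) :=
    volume.withDensity (carlesonFn n μ) with hν_def
  have h𝒞m : Measurable (carlesonFn n μ) := (carlesonFn_lsc n μ).measurable
  have hkey : ∀ b ∈ u,
      μ (parabolicTent n (ball (id b) (3 * d b)))
        ≤ ENNReal.ofReal (15 ^ n) * ν (ball b (d b / 5)) := by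
    intro b hbu
    have hdb : 0 < d b := hu_pos b hbu
    set B3 : Set (EuclideanSpace ℝ (Fin n)) := ball b (3 * d b) with hB3
    have h0 : volume B3 ≠ 0 := (measure_ball_pos volume b (by positivity)).ne'
    have hT : volume B3 ≠ ⊤ := measure_ball_lt_top.ne
    have hvol3 : volume B3 = ENNReal.ofReal ((3 * d b) ^ n) * volume (ball (0 : EuclideanSpace ℝ (Fin n)) 1) := by
      rw [hB3, Measure.addHaar_ball volume b (by positivity), finrank_euclideanSpace_fin]
    have hvols : volume (ball b (d b / 5)) = ENNReal.ofReal ((d b / 5) ^ n) * volume (ball (0 : EuclideanSpace ℝ (Fin n)) 1) := by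
      rw [Measure.addHaar_ball volume b (by positivity), finrank_euclideanSpace_fin]
    have hratio : volume B3 = ENNReal.ofReal (15 ^ n) * volume (ball b (d b / 5)) := by
      rw [hvol3, hvols, ← mul_assoc, ← ENNReal.ofReal_mul (by positivity), ← mul_pow,
        show (15:ℝ) * (d b / 5) = 3 * d b by ring]
    have hC : ∀ x ∈ ball b (d b / 5),
        μ (parabolicTent n B3) / volume B3 ≤ carlesonFn n μ x := by
      intro x hx
      have hx3 : x ∈ B3 := ball_subset_ball (by linarith) hx
      rw [carlesonFn]
      exact le_iSup_of_le b (le_iSup_of_le (3 * d b)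
        (le_iSup_of_le (by positivity) (le_iSup_of_le hx3 le_rfl)))
    have hint : μ (parabolicTent n B3) / volume B3 * volume (ball b (d b / 5))
        ≤ ν (ball b (d b / 5)) := by
      rw [hν_def, withDensity_apply _ measurableSet_ball, ← setLIntegral_const]
      exact setLIntegral_mono h𝒞m hC
    calc μ (parabolicTent n B3)
        = volume B3 * (μ (parabolicTent n B3) / volume B3) :=
          (ENNReal.mul_div_cancel h0 hT).symm
      _ = ENNReal.ofReal (15 ^ n) *
            (μ (parabolicTent n B3) / volume B3 * volume (ball b (d b / 5))) := by
          rw [hratio]; ring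
      _ ≤ ENNReal.ofReal (15 ^ n) * ν (ball b (d b / 5)) := by
          exact mul_le_mul_right hint _
  calc (∑' b : u, μ (parabolicTent n (ball (id b) (3 * d ↑b))))
      ≤ ∑' b : u, ENNReal.ofReal (15 ^ n) * ν (ball ↑b (d ↑b / 5)) :=
        ENNReal.tsum_le_tsum fun b => hkey b b.2
    _ = ENNReal.ofReal (15 ^ n) * ∑' b : u, ν (ball (↑b) (d ↑b / 5)) :=
        ENNReal.tsum_mul_left
    _ = ENNReal.ofReal (15 ^ n) * ν (⋃ b ∈ u, ball b (d b / 5)) := by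
        rw [measure_biUnion hu_count hdisj' fun b _ => measurableSet_ball]
    _ ≤ ENNReal.ofReal (15 ^ n) * ν O := by
        refine mul_le_mul_right (measure_mono ?_) _
        refine Set.iUnion₂_subset fun b hbu => fun w hw => ?_
        by_contra hwO
        have : d b ≤ dist b w := infDist_le_dist_of_mem hwO
        have hdb : 0 < d b := hu_pos b hbu
        rw [mem_ball, dist_comm] at hw
        linarith
    _ = ENNReal.ofReal (15 ^ n) * ∫⁻ x in O, carlesonFn n μ x := by
        rw [hν_def, withDensity_apply _ hO]

/-- **Parabolic Carleson embedding:**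
`∫ |H| dμ ≤ C_n ∫ N(H)(x) 𝒞(μ)(x) dx`. -/
theorem carleson_embedding (n : ℕ) (hn : 1 ≤ n) :
    ∃ C : ℝ, 0 < C ∧
      ∀ (μ : Measure (ℝ × EuclideanSpace ℝ (Fin n)))
        (H : ℝ × EuclideanSpace ℝ (Fin n) → ℂ),
        ContinuousOn H {z | 0 < z.1} →
        (∫⁻ x, ntMax n H x) < ⊤ →
        (∫⁻ z in {z : ℝ × EuclideanSpace ℝ (Fin n) | 0 < z.1}, ENNReal.ofReal ‖H z‖ ∂μ)
          ≤ ENNReal.ofReal C * ∫⁻ x, ntMax n H x * carlesonFn n μ x := by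
  refine ⟨15 ^ n, by positivity, ?_⟩
  intro μ H hH hfin
  haveI : Nonempty (Fin n) := ⟨⟨0, hn⟩⟩
  set N : EuclideanSpace ℝ (Fin n) → ℝ≥0∞ := ntMax n H with hN
  set 𝒞 : EuclideanSpace ℝ (Fin n) → ℝ≥0∞ := carlesonFn n μ with h𝒞
  have hNm : Measurable N := (ntMax_lsc n H).measurable
  have h𝒞m : Measurable 𝒞 := (carlesonFn_lsc n μ).measurable
  have hUopen : IsOpen {z : ℝ × EuclideanSpace ℝ (Fin n) | 0 < z.1} :=
    isOpen_lt continuous_const continuous_fst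
  have hU : MeasurableSet {z : ℝ × EuclideanSpace ℝ (Fin n) | 0 < z.1} := hUopen.measurableSet
  set ρ : Measure (ℝ × EuclideanSpace ℝ (Fin n)) := μ.restrict {z | 0 < z.1} with hρ
  have hfmeas : AEMeasurable (fun z => ‖H z‖) ρ := (hH.norm).aemeasurable hU
  have hlayer : (∫⁻ z in {z : ℝ × EuclideanSpace ℝ (Fin n) | 0 < z.1},
      ENNReal.ofReal ‖H z‖ ∂μ) = ∫⁻ lam in Set.Ioi (0:ℝ), ρ {z | lam < ‖H z‖} :=
    lintegral_eq_lintegral_meas_lt ρ (Filter.Eventually.of_forall fun z => norm_nonneg _) hfmeas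
  -- the superlevel sets of the maximal function
  set Olam : ℝ → Set (EuclideanSpace ℝ (Fin n)) :=
    fun lam => {x | ENNReal.ofReal lam < N x} with hOlam
  have hOopen : ∀ lam, IsOpen (Olam lam) := fun lam =>
    (ntMax_lsc n H).isOpen_preimage (ENNReal.ofReal lam)
  -- complement of superlevel set is nonempty for positive levels
  have hOc_ne : ∀ lam : ℝ, 0 < lam → ((Olam lam)ᶜ).Nonempty := by
    intro lam hlam
    rw [Set.nonempty_compl]
    intro huniv
    have hall : ∀ x, ENNReal.ofReal lam < N x := fun x => by
      have : x ∈ Olam lam := huniv ▸ Set.mem_univ x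
      exact this
    have hbig : (ENNReal.ofReal lam) * volume (Set.univ : Set (EuclideanSpace ℝ (Fin n)))
        ≤ ∫⁻ x, N x := by
      rw [← lintegral_const]
      exact lintegral_mono fun x => (hall x).le
    rw [measure_univ_of_isAddLeftInvariant] at hbig
    rw [ENNReal.mul_top (ENNReal.ofReal_pos.2 hlam).ne'] at hbig
    exact (lt_irrefl ⊤) (lt_of_le_of_lt (hbig.trans (le_of_eq rfl)) hfin)
  -- distribution set is inside the tent over the superlevel set
  have hsub : ∀ lam : ℝ, 0 < lam →
      ρ {z | lam < ‖H z‖} ≤ μ (parabolicTent n (Olam lam)) := by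
    intro lam hlam
    rw [hρ, Measure.restrict_apply' hU]
    refine measure_mono ?_
    rintro ⟨t, y⟩ ⟨hz, ht⟩
    have hz' : lam < ‖H (t, y)‖ := hz
    have ht' : (0:ℝ) < t := ht
    refine ⟨ht', ?_⟩
    by_contra hlt
    push_neg at hlt
    obtain ⟨w, hw, hwd⟩ := (infDist_lt_iff (hOc_ne lam hlam)).1 hlt
    have hwN : ¬ (ENNReal.ofReal lam < N w) := hw
    refine hwN ?_
    have hmem : y ∈ ball w (Real.sqrt t) := by
      rw [mem_ball]; exact hwd
    have hle : ENNReal.ofReal ‖H (t, y)‖ ≤ N w := by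
      rw [hN, ntMax]
      exact le_iSup_of_le t (le_iSup_of_le ht' (le_iSup_of_le y (le_iSup_of_le hmem le_rfl)))
    refine lt_of_lt_of_le ?_ hle
    exact ENNReal.ofReal_lt_ofReal_iff (lt_trans hlam hz') |>.2 hz'
  -- measure of the tent via the covering lemma
  set ν : Measure (EuclideanSpace ℝ (Fin n)) := volume.withDensity 𝒞 with hν
  have htent : ∀ lam : ℝ, 0 < lam →
      ρ {z | lam < ‖H z‖} ≤ ENNReal.ofReal (15 ^ n) * ν (Olam lam) := by
    intro lam hlam
    refine (hsub lam hlam).trans ?_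
    refine (tent_measure_le hn μ (Olam lam) (hOopen lam).measurableSet).trans ?_
    rw [hν, withDensity_apply _ (hOopen lam).measurableSet]
  rw [hlayer]
  have hstep : (∫⁻ lam in Set.Ioi (0:ℝ), ρ {z | lam < ‖H z‖})
      ≤ ∫⁻ lam in Set.Ioi (0:ℝ), ENNReal.ofReal (15 ^ n) * ν (Olam lam) :=
    setLIntegral_mono' measurableSet_Ioi fun lam hlam => htent lam hlam
  refine hstep.trans ?_
  rw [lintegral_const_mul' _ _ ENNReal.ofReal_ne_top]
  refine mul_le_mul_right (le_of_eq ?_) _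
  -- Fubini computation
  have hind : ∀ lam : ℝ, ν (Olam lam)
      = ∫⁻ x, ({p : ℝ × EuclideanSpace ℝ (Fin n) | ENNReal.ofReal p.1 < N p.2}.indicator
          (fun p => 𝒞 p.2)) (lam, x) := by
    intro lam
    rw [hν, withDensity_apply _ (hOopen lam).measurableSet,
      ← lintegral_indicator (hOopen lam).measurableSet]
    refine lintegral_congr fun x => ?_
    by_cases hx : ENNReal.ofReal lam < N x
    · rw [Set.indicator_of_mem (show x ∈ Olam lam from hx),
        Set.indicator_of_mem
          (show (lam, x) ∈ {p : ℝ × EuclideanSpace ℝ (Fin n) | ENNReal.ofReal p.1 < N p.2}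
            from hx)]
    · rw [Set.indicator_of_notMem (show x ∉ Olam lam from hx),
        Set.indicator_of_notMem
          (show (lam, x) ∉ {p : ℝ × EuclideanSpace ℝ (Fin n) | ENNReal.ofReal p.1 < N p.2}
            from hx)]
  have hmeasA : MeasurableSet {p : ℝ × EuclideanSpace ℝ (Fin n) | ENNReal.ofReal p.1 < N p.2} :=
    measurableSet_lt (ENNReal.measurable_ofReal.comp measurable_fst) (hNm.comp measurable_snd)
  have hswap : (∫⁻ lam in Set.Ioi (0:ℝ), ν (Olam lam))
      = ∫⁻ x, ∫⁻ lam in Set.Ioi (0:ℝ),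
          ({p : ℝ × EuclideanSpace ℝ (Fin n) | ENNReal.ofReal p.1 < N p.2}.indicator
            (fun p => 𝒞 p.2)) (lam, x) := by
    simp_rw [hind]
    exact lintegral_lintegral_swap (((h𝒞m.comp measurable_snd).indicator hmeasA).aemeasurable)
  rw [hswap]
  refine lintegral_congr fun x => ?_
  have hrw : ∀ lam : ℝ,
      ({p : ℝ × EuclideanSpace ℝ (Fin n) | ENNReal.ofReal p.1 < N p.2}.indicator
        (fun p => 𝒞 p.2)) (lam, x)
      = ({lam' : ℝ | ENNReal.ofReal lam' < N x}.indicator (fun _ => 𝒞 x)) lam := by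
    intro lam
    by_cases hx : ENNReal.ofReal lam < N x
    · rw [Set.indicator_of_mem
          (show (lam, x) ∈ {p : ℝ × EuclideanSpace ℝ (Fin n) | ENNReal.ofReal p.1 < N p.2}
            from hx),
        Set.indicator_of_mem (show lam ∈ {lam' : ℝ | ENNReal.ofReal lam' < N x} from hx)]
    · rw [Set.indicator_of_notMem
          (show (lam, x) ∉ {p : ℝ × EuclideanSpace ℝ (Fin n) | ENNReal.ofReal p.1 < N p.2}
            from hx),
        Set.indicator_of_notMem (show lam ∉ {lam' : ℝ | ENNReal.ofReal lam' < N x} from hx)]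
  simp_rw [hrw]
  have hsm : MeasurableSet {lam' : ℝ | ENNReal.ofReal lam' < N x} :=
    measurableSet_lt ENNReal.measurable_ofReal measurable_const
  rw [lintegral_indicator_const hsm, Measure.restrict_apply hsm]
  have hvol : volume ({lam' : ℝ | ENNReal.ofReal lam' < N x} ∩ Set.Ioi 0) = N x := by
    by_cases hNx : N x = ⊤
    · have : {lam' : ℝ | ENNReal.ofReal lam' < N x} ∩ Set.Ioi 0 = Set.Ioi 0 := by
        ext lam'
        simp [hNx, ENNReal.ofReal_lt_top]
      rw [this, Real.volume_Ioi, hNx]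
    · have : {lam' : ℝ | ENNReal.ofReal lam' < N x} ∩ Set.Ioi 0 = Set.Ioo 0 (N x).toReal := by
        ext lam'
        simp only [Set.mem_inter_iff, Set.mem_setOf_eq, Set.mem_Ioi, Set.mem_Ioo]
        constructor
        · rintro ⟨h1, h2⟩
          exact ⟨h2, (ENNReal.ofReal_lt_iff_lt_toReal h2.le hNx).1 h1⟩
        · rintro ⟨h1, h2⟩
          exact ⟨(ENNReal.ofReal_lt_iff_lt_toReal h1.le hNx).2 h2, h1⟩
      rw [this, Real.volume_Ioo, sub_zero, ENNReal.ofReal_toReal hNx]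
  rw [hvol, mul_comm]
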